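/- Let (X, Y) be a centered square-integrable pair of random vectors with X valued in ℝ^{d_x} and Y valued in ℝ^{d_y}, d_y ≥ 2, and set Σ_X = E[XXᵀ], Σ_Y = E[YYᵀ], Σ_{XY} = E[XYᵀ]. Write Y = (Y₁, Y₋₁) with Y₁ the first coordinate. Suppose (α°, γ°) ∈ ℝ^{d_x} × ℝ^{d_y − 1} minimizes E[(Y₁ − αᵀX + γᵀY₋₁)²] over all (α, γ), and set β° = (1, γ°ᵀ)ᵀ ∈ ℝ^{d_y}, A = α°ᵀΣ_X α°, B = β°ᵀΣ_Y β°. Then (α°, β°) solves the program max αᵀΣ_{XY}β over all (α, β) ∈ ℝ^{d_x} × ℝ^{d_y} subject to αᵀΣ_X α = A, βᵀΣ_Y β = B, and β₁ = 1; that is, every such (α, β) satisfies αᵀΣ_{XY}β ≤ α°ᵀΣ_{XY}β°. -/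

import Mathlib

open MeasureTheory ProbabilityTheory Matrix

lemma memLp_two_integrable_mul {Ω : Type*} [MeasurableSpace Ω] {μ : Measure Ω}
    {f g : Ω → ℝ} (hf : MemLp f 2 μ) (hg : MemLp g 2 μ) :
    Integrable (fun ω => f ω * g ω) μ := by
  have h1 : Integrable (fun ω => (f ω + g ω) ^ 2) μ := (hf.add hg).integrable_sq
  have h2 := hf.integrable_sq
  have h3 := hg.integrable_sq
  have heq : (fun ω => f ω * g ω)
      = fun ω => (((f ω + g ω) ^ 2 - f ω ^ 2) - g ω ^ 2) / 2 := funext fun ω => by ring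
  rw [heq]
  exact ((h1.sub h2).sub h3).div_const 2

lemma dot_memLp {Ω : Type*} [MeasurableSpace Ω] {μ : Measure Ω} {n : ℕ}
    (v : Fin n → ℝ) (Z : Ω → Fin n → ℝ) (h : ∀ i, MemLp (fun ω => Z ω i) 2 μ) :
    MemLp (fun ω => v ⬝ᵥ Z ω) 2 μ := by
  simp only [dotProduct]
  exact memLp_finset_sum _ (fun i _ => (h i).const_mul (v i))

lemma int_dot_mul_dot {Ω : Type*} [MeasurableSpace Ω] {μ : Measure Ω} {n k : ℕ}
    (v : Fin n → ℝ) (w : Fin k → ℝ) (Z : Ω → Fin n → ℝ) (W : Ω → Fin k → ℝ)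
    (hZ : ∀ i, MemLp (fun ω => Z ω i) 2 μ) (hW : ∀ j, MemLp (fun ω => W ω j) 2 μ) :
    ∫ ω, (v ⬝ᵥ Z ω) * (w ⬝ᵥ W ω) ∂μ
      = ∑ i, ∑ j, v i * w j * ∫ ω, Z ω i * W ω j ∂μ := by
  have key : ∀ ω, (v ⬝ᵥ Z ω) * (w ⬝ᵥ W ω)
      = ∑ i, ∑ j, v i * w j * (Z ω i * W ω j) := by
    intro ω
    simp only [dotProduct, Finset.sum_mul_sum]
    refine Finset.sum_congr rfl fun i _ => Finset.sum_congr rfl fun j _ => by ring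
  simp_rw [key]
  rw [integral_finset_sum _ (fun i _ => integrable_finset_sum _
    (fun j _ => ((memLp_two_integrable_mul (hZ i) (hW j)).const_mul _)))]
  refine Finset.sum_congr rfl fun i _ => ?_
  rw [integral_finset_sum _ (fun j _ => ((memLp_two_integrable_mul (hZ i) (hW j)).const_mul _))]
  exact Finset.sum_congr rfl fun j _ => integral_const_mul _ _

lemma quad_form_eq_sum {n : ℕ} (v w : Fin n → ℝ) (M : Matrix (Fin n) (Fin n) ℝ) :
    v ⬝ᵥ M *ᵥ w = ∑ i, ∑ j, v i * w j * M i j := by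
  simp only [dotProduct, mulVec, Finset.mul_sum]
  refine Finset.sum_congr rfl fun i _ => Finset.sum_congr rfl fun j _ => by ring

lemma bilin_form_eq_sum {n k : ℕ} (v : Fin n → ℝ) (w : Fin k → ℝ)
    (M : Matrix (Fin n) (Fin k) ℝ) :
    v ⬝ᵥ M *ᵥ w = ∑ i, ∑ j, v i * w j * M i j := by
  simp only [dotProduct, mulVec, Finset.mul_sum]
  refine Finset.sum_congr rfl fun i _ => Finset.sum_congr rfl fun j _ => by ring

/-- OLS as constrained canonical correlation: for a centered square-integrable pair of
random vectors `(X, Y)` with `Y` of dimension `d_y = m + 1 ≥ 2`, write `Y = (Y₁, Y₋₁)`.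
If `(α°, γ°)` minimizes the OLS objective `E[(Y₁ − αᵀX + γᵀY₋₁)²]` and
`β° = (1, γ°ᵀ)ᵀ`, then `(α°, β°)` maximizes `αᵀΣ_{XY}β` subject to
`αᵀΣ_Xα = α°ᵀΣ_Xα°`, `βᵀΣ_Yβ = β°ᵀΣ_Yβ°` and `β₁ = 1`. -/
theorem stmt_18 {Ω : Type*} [MeasurableSpace Ω] (μ : Measure Ω) [IsProbabilityMeasure μ]
    {dx m : ℕ} (hm : 1 ≤ m)
    (X : Ω → (Fin dx → ℝ)) (Y : Ω → (Fin (m + 1) → ℝ))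
    (hXmeas : Measurable X) (hYmeas : Measurable Y)
    (hXsq : ∀ i, MemLp (fun ω => X ω i) 2 μ) (hYsq : ∀ j, MemLp (fun ω => Y ω j) 2 μ)
    (hXcent : ∀ i, ∫ ω, X ω i ∂μ = 0) (hYcent : ∀ j, ∫ ω, Y ω j ∂μ = 0)
    (SX : Matrix (Fin dx) (Fin dx) ℝ) (hSX : ∀ i j, SX i j = ∫ ω, X ω i * X ω j ∂μ)
    (SY : Matrix (Fin (m + 1)) (Fin (m + 1)) ℝ)
    (hSY : ∀ i j, SY i j = ∫ ω, Y ω i * Y ω j ∂μ)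
    (SXY : Matrix (Fin dx) (Fin (m + 1)) ℝ)
    (hSXY : ∀ i j, SXY i j = ∫ ω, X ω i * Y ω j ∂μ)
    (αo : Fin dx → ℝ) (γo : Fin m → ℝ)
    (hmin : ∀ (a : Fin dx → ℝ) (g : Fin m → ℝ),
      ∫ ω, (Y ω 0 - αo ⬝ᵥ X ω + γo ⬝ᵥ (fun i => Y ω i.succ)) ^ 2 ∂μ ≤
        ∫ ω, (Y ω 0 - a ⬝ᵥ X ω + g ⬝ᵥ (fun i => Y ω i.succ)) ^ 2 ∂μ)
    (βo : Fin (m + 1) → ℝ) (hβo : βo = Fin.cons 1 γo) :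
    ∀ (α : Fin dx → ℝ) (β : Fin (m + 1) → ℝ),
      α ⬝ᵥ SX *ᵥ α = αo ⬝ᵥ SX *ᵥ αo →
      β ⬝ᵥ SY *ᵥ β = βo ⬝ᵥ SY *ᵥ βo →
      β 0 = 1 →
      α ⬝ᵥ SXY *ᵥ β ≤ αo ⬝ᵥ SXY *ᵥ βo := by
  -- The OLS objective in terms of second-moment matrices
  have obj : ∀ (a : Fin dx → ℝ) (g : Fin m → ℝ),
      ∫ ω, (Y ω 0 - a ⬝ᵥ X ω + g ⬝ᵥ (fun i => Y ω i.succ)) ^ 2 ∂μ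
        = (Fin.cons 1 g : Fin (m + 1) → ℝ) ⬝ᵥ SY *ᵥ (Fin.cons 1 g)
          - 2 * (a ⬝ᵥ SXY *ᵥ (Fin.cons 1 g)) + a ⬝ᵥ SX *ᵥ a := by
    intro a g
    set b : Fin (m + 1) → ℝ := Fin.cons 1 g with hb
    have hrw : ∀ ω, Y ω 0 - a ⬝ᵥ X ω + g ⬝ᵥ (fun i => Y ω i.succ)
        = b ⬝ᵥ Y ω - a ⬝ᵥ X ω := by
      intro ω
      simp only [hb, dotProduct, Fin.sum_univ_succ, Fin.cons_zero, Fin.cons_succ]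
      ring
    have hbY := dot_memLp b Y hYsq
    have haX := dot_memLp a X hXsq
    have h1 := memLp_two_integrable_mul hbY hbY
    have h2 := memLp_two_integrable_mul haX hbY
    have h3 := memLp_two_integrable_mul haX haX
    have hexp : ∀ ω, (Y ω 0 - a ⬝ᵥ X ω + g ⬝ᵥ (fun i => Y ω i.succ)) ^ 2
        = (b ⬝ᵥ Y ω) * (b ⬝ᵥ Y ω) - 2 * ((a ⬝ᵥ X ω) * (b ⬝ᵥ Y ω))
          + (a ⬝ᵥ X ω) * (a ⬝ᵥ X ω) := by
      intro ω; rw [hrw ω]; ring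
    calc ∫ ω, (Y ω 0 - a ⬝ᵥ X ω + g ⬝ᵥ (fun i => Y ω i.succ)) ^ 2 ∂μ
        = ∫ ω, ((b ⬝ᵥ Y ω) * (b ⬝ᵥ Y ω) - 2 * ((a ⬝ᵥ X ω) * (b ⬝ᵥ Y ω))
            + (a ⬝ᵥ X ω) * (a ⬝ᵥ X ω)) ∂μ := by
          exact integral_congr_ae (Filter.Eventually.of_forall hexp)
      _ = (∫ ω, (b ⬝ᵥ Y ω) * (b ⬝ᵥ Y ω) ∂μ)
            - 2 * (∫ ω, (a ⬝ᵥ X ω) * (b ⬝ᵥ Y ω) ∂μ)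
            + ∫ ω, (a ⬝ᵥ X ω) * (a ⬝ᵥ X ω) ∂μ := by
          have h12 : Integrable
              (fun ω => (b ⬝ᵥ Y ω) * (b ⬝ᵥ Y ω) - 2 * ((a ⬝ᵥ X ω) * (b ⬝ᵥ Y ω))) μ :=
            h1.sub (h2.const_mul 2)
          rw [integral_add h12 h3, integral_sub h1 (h2.const_mul 2), integral_const_mul]
      _ = b ⬝ᵥ SY *ᵥ b - 2 * (a ⬝ᵥ SXY *ᵥ b) + a ⬝ᵥ SX *ᵥ a := by
          rw [int_dot_mul_dot b b Y Y hYsq hYsq, int_dot_mul_dot a b X Y hXsq hYsq,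
            int_dot_mul_dot a a X X hXsq hXsq,
            quad_form_eq_sum b b SY, bilin_form_eq_sum a b SXY, quad_form_eq_sum a a SX]
          simp_rw [hSY, hSXY, hSX]
  intro α β hA hB hβ0
  have hβ : β = Fin.cons 1 (Fin.tail β) := by
    rw [← hβ0]; exact (Fin.cons_self_tail β).symm
  have hineq := hmin α (Fin.tail β)
  rw [obj αo γo, obj α (Fin.tail β), ← hβo, ← hβ] at hineq
  linarith
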